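/- For the star graph S_n, perturbing the edge [1, i₀] from the hub 1 to a leaf i₀ by Δ > −1 gives d_{rp(1)}(S_n, S_n + Δ_{1 i₀}) = 2(n−1)|Δ|/(1 + Δ), and adding an edge of weight Δ ≥ 0 between two leaves i₀ and j₀ gives d_{rp(1)}(S_n, S_n + Δ_{i₀j₀}) = 4nΔ/(1 + 2Δ). -/

import Mathlib

open Matrix Finset

/-- `A` is a (weighted) adjacency matrix: symmetric, nonnegative, no self-loops. -/
def IsAdjMat {n : ℕ} (A : Matrix (Fin n) (Fin n) ℝ) : Prop :=
  A.IsSymm ∧ (∀ i j, 0 ≤ A i j) ∧ ∀ i, A i i = 0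

/-- Combinatorial Laplacian `L = D - A`. -/
def lap {n : ℕ} (A : Matrix (Fin n) (Fin n) ℝ) : Matrix (Fin n) (Fin n) ℝ :=
  Matrix.diagonal (fun i => ∑ j, A i j) - A

/-- Connectivity: the kernel of the Laplacian is spanned by the all-ones vector. -/
def IsConnectedLap {n : ℕ} (L : Matrix (Fin n) (Fin n) ℝ) : Prop :=
  ∀ v : Fin n → ℝ, L.mulVec v = 0 → ∃ c : ℝ, v = fun _ => c

/-- `Ld` is the Moore–Penrose pseudoinverse of `L`. -/
def IsMoorePenrose {n : ℕ} (L Ld : Matrix (Fin n) (Fin n) ℝ) : Prop :=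
  L * Ld * L = L ∧ Ld * L * Ld = Ld ∧ (L * Ld)ᵀ = L * Ld ∧ (Ld * L)ᵀ = Ld * L

/-- Effective resistance `R_ij = L†_ii + L†_jj - 2 L†_ij`. -/
def effR {n : ℕ} (Ld : Matrix (Fin n) (Fin n) ℝ) (i j : Fin n) : ℝ :=
  Ld i i + Ld j j - 2 * Ld i j

/-- Adjacency matrix of the unweighted complete graph `K_n`. -/
def completeAdj (n : ℕ) : Matrix (Fin n) (Fin n) ℝ :=
  Matrix.of fun i j => if i = j then 0 else 1

/-- Symmetric single-edge perturbation matrix: adds `Δ` to the weight of edge `[i₀, j₀]`. -/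
def edgePert {n : ℕ} (i₀ j₀ : Fin n) (Δ : ℝ) : Matrix (Fin n) (Fin n) ℝ :=
  Matrix.of fun i j => if (i = i₀ ∧ j = j₀) ∨ (i = j₀ ∧ j = i₀) then Δ else 0

/-- Adjacency matrix of the unweighted star graph `S_n` with hub the vertex of index 0. -/
def starAdj (n : ℕ) : Matrix (Fin n) (Fin n) ℝ :=
  Matrix.of fun i j => if i ≠ j ∧ (i.val = 0 ∨ j.val = 0) then 1 else 0

/-- Adjacency matrix of the unweighted path graph `P_n` on vertices `0, …, n-1`. -/
def pathAdj (n : ℕ) : Matrix (Fin n) (Fin n) ℝ :=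
  Matrix.of fun i j => if i.val + 1 = j.val ∨ j.val + 1 = i.val then 1 else 0

/-- Adjacency matrix of the unweighted cycle graph `C_n`. -/
def cycleAdj (n : ℕ) : Matrix (Fin n) (Fin n) ℝ :=
  Matrix.of fun i j => if (i.val + 1) % n = j.val ∨ (j.val + 1) % n = i.val then 1 else 0

namespace StarRP1

variable {n : ℕ}

def o (n : ℕ) : Fin n → ℝ := fun _ => 1
def δ (i : Fin n) : Fin n → ℝ := fun k => if k = i then 1 else 0

@[simp] lemma dot_oo : o n ⬝ᵥ o n = n := by simp [o, dotProduct]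
@[simp] lemma dot_oδ (i : Fin n) : o n ⬝ᵥ δ i = 1 := by simp [o, δ, dotProduct]
@[simp] lemma dot_δo (i : Fin n) : δ i ⬝ᵥ o n = 1 := by simp [o, δ, dotProduct]
@[simp] lemma dot_δδ (i j : Fin n) : δ i ⬝ᵥ δ j = if i = j then 1 else 0 := by
  simp [δ, dotProduct, ite_mul, one_mul, zero_mul, Finset.sum_ite_eq']
  split_ifs with h1 h2 h3 <;> simp_all

lemma vmv_mul_vmv (a b c d : Fin n → ℝ) :
    vecMulVec a b * vecMulVec c d = (b ⬝ᵥ c) • vecMulVec a d := by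
  ext i j
  simp [mul_apply, vecMulVec_apply, dotProduct, Finset.sum_mul, Finset.mul_sum]
  congr 1; funext k; ring

lemma vmv_mulVec (x y z : Fin n → ℝ) : (vecMulVec x y).mulVec z = (y ⬝ᵥ z) • x := by
  funext i
  simp [mulVec, vecMulVec_apply, dotProduct, Finset.mul_sum]
  rw [Finset.sum_mul]; congr 1; funext k; ring

lemma mul_vmv (A : Matrix (Fin n) (Fin n) ℝ) (x y : Fin n → ℝ) :
    A * vecMulVec x y = vecMulVec (A.mulVec x) y := by
  ext i j
  simp [mul_apply, vecMulVec_apply, mulVec, dotProduct, Finset.sum_mul]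
  congr 1; funext k; ring

lemma vmv_mul (A : Matrix (Fin n) (Fin n) ℝ) (x y : Fin n → ℝ) :
    vecMulVec x y * A = vecMulVec x (Aᵀ.mulVec y) := by
  ext i j
  simp [mul_apply, vecMulVec_apply, mulVec, dotProduct, transpose_apply, Finset.mul_sum]
  congr 1; funext k; ring

@[simp] lemma vmv_transpose (a b : Fin n → ℝ) : (vecMulVec a b)ᵀ = vecMulVec b a := by
  ext i j; simp [vecMulVec_apply, transpose_apply, mul_comm]

/-! ### Laplacian identifications -/

lemma lap_add (A B : Matrix (Fin n) (Fin n) ℝ) : lap (A + B) = lap A + lap B := by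
  ext i j
  simp [lap, Matrix.diagonal_apply, Matrix.sub_apply, Matrix.add_apply,
    Finset.sum_add_distrib]
  split_ifs <;> ring

lemma lap_pert (a b : Fin n) (hab : a ≠ b) (Δ : ℝ) :
    lap (edgePert a b Δ) = Δ • vecMulVec (δ a - δ b) (δ a - δ b) := by
  have hsum : ∀ i : Fin n, ∑ k, edgePert a b Δ i k
      = (if i = a then Δ else 0) + (if i = b then Δ else 0) := by
    intro i
    by_cases h1 : i = a
    · have h2 : ∀ k : Fin n, edgePert a b Δ i k = if k = b then Δ else 0 := by
        intro k
        simp only [edgePert, Matrix.of_apply]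
        by_cases h3 : k = b <;> by_cases h4 : k = a <;> simp_all
      rw [Finset.sum_congr rfl fun k _ => h2 k, Finset.sum_ite_eq']
      simp_all
    · by_cases h2 : i = b
      · have h3 : ∀ k : Fin n, edgePert a b Δ i k = if k = a then Δ else 0 := by
          intro k
          simp only [edgePert, Matrix.of_apply]
          by_cases h3 : k = b <;> by_cases h4 : k = a <;> simp_all
        rw [Finset.sum_congr rfl fun k _ => h3 k, Finset.sum_ite_eq']
        simp_all
      · have h3 : ∀ k : Fin n, edgePert a b Δ i k = 0 := by
          intro k; simp only [edgePert, Matrix.of_apply]; simp_all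
        rw [Finset.sum_congr rfl fun k _ => h3 k]
        simp_all
  ext i j
  simp only [lap, Matrix.diagonal_apply, Matrix.sub_apply, hsum, edgePert,
    Matrix.of_apply, vecMulVec_apply, Pi.sub_apply, δ, Matrix.smul_apply, smul_eq_mul]
  by_cases hia : i = a <;> by_cases hib : i = b <;> by_cases hja : j = a <;>
    by_cases hjb : j = b <;> simp_all <;> try ring
  all_goals (intro h; subst h; simp_all)

lemma lap_star (hub : Fin n) (hhub : hub.val = 0) :
    lap (starAdj n) = 1 - vecMulVec (δ hub) (o n) - vecMulVec (o n) (δ hub)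
      + (n : ℝ) • vecMulVec (δ hub) (δ hub) := by
  have hval : ∀ k : Fin n, k.val = 0 ↔ k = hub := fun k =>
    ⟨fun h => Fin.ext (h.trans hhub.symm), fun h => h ▸ hhub⟩
  have hsum : ∀ i : Fin n, ∑ k, starAdj n i k
      = if i = hub then (n : ℝ) - 1 else 1 := by
    intro i
    by_cases hi : i = hub
    · subst hi
      have h1 : ∀ k : Fin n, starAdj n i k = 1 - (if k = i then 1 else 0) := by
        intro k
        simp only [starAdj, Matrix.of_apply, hval]
        split_ifs <;> simp_all [eq_comm]
      rw [Finset.sum_congr rfl fun k _ => h1 k, Finset.sum_sub_distrib,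
        Finset.sum_const, Finset.sum_ite_eq']
      simp [Finset.card_univ]
    · have h1 : ∀ k : Fin n, starAdj n i k = (if k = hub then 1 else 0) := by
        intro k
        simp only [starAdj, Matrix.of_apply, hval]
        split_ifs <;> simp_all [eq_comm]
      rw [Finset.sum_congr rfl fun k _ => h1 k, Finset.sum_ite_eq']
      simp [hi]
  ext i j
  simp only [lap, Matrix.diagonal_apply, Matrix.sub_apply, Matrix.add_apply,
    Matrix.smul_apply, smul_eq_mul, Matrix.one_apply, vecMulVec_apply, δ, o]
  rw [hsum]
  simp only [starAdj, Matrix.of_apply, hval]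
  by_cases hij : i = j <;> by_cases hih : i = hub <;> by_cases hjh : j = hub <;>
    simp_all <;> ring

/-! ### Moore–Penrose lemmas -/

lemma mp_unique {L X Y : Matrix (Fin n) (Fin n) ℝ}
    (hX : IsMoorePenrose L X) (hY : IsMoorePenrose L Y) : X = Y := by
  obtain ⟨hX1, hX2, hX3, hX4⟩ := hX
  obtain ⟨hY1, hY2, hY3, hY4⟩ := hY
  have h1 : L * X = L * Y := by
    have e1 : L * X = (L * X) * (L * Y) := by
      calc L * X = (L * X)ᵀ := hX3.symm
        _ = Xᵀ * Lᵀ := by rw [transpose_mul]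
        _ = Xᵀ * (L * Y * L)ᵀ := by rw [hY1]
        _ = Xᵀ * (Lᵀ * (L * Y)ᵀ) := by rw [transpose_mul]
        _ = (Xᵀ * Lᵀ) * (L * Y)ᵀ := by rw [Matrix.mul_assoc]
        _ = (L * X)ᵀ * (L * Y)ᵀ := by rw [← transpose_mul]
        _ = (L * X) * (L * Y) := by rw [hX3, hY3]
    calc L * X = (L * X) * (L * Y) := e1
      _ = ((L * X) * L) * Y := (Matrix.mul_assoc _ _ _).symm
      _ = L * Y := by rw [hX1]
  have h2 : X * L = Y * L := by
    have e1 : X * L = (Y * L) * (X * L) := by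
      calc X * L = (X * L)ᵀ := hX4.symm
        _ = Lᵀ * Xᵀ := by rw [transpose_mul]
        _ = (L * Y * L)ᵀ * Xᵀ := by rw [hY1]
        _ = ((Y * L)ᵀ * Lᵀ) * Xᵀ := by rw [show (L * Y * L)ᵀ = (Y * L)ᵀ * Lᵀ by
              rw [Matrix.mul_assoc, transpose_mul, transpose_mul]]
        _ = (Y * L)ᵀ * (Lᵀ * Xᵀ) := by rw [Matrix.mul_assoc]
        _ = (Y * L)ᵀ * (X * L)ᵀ := by rw [← transpose_mul]
        _ = (Y * L) * (X * L) := by rw [hX4, hY4]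
    calc X * L = (Y * L) * (X * L) := e1
      _ = Y * (L * X * L) := by
          rw [Matrix.mul_assoc Y L (X * L), ← Matrix.mul_assoc L X L]
      _ = Y * L := by rw [hX1]
  calc X = X * L * X := hX2.symm
    _ = (Y * L) * X := by rw [h2]
    _ = Y * (L * X) := by rw [Matrix.mul_assoc]
    _ = Y * (L * Y) := by rw [h1]
    _ = Y * L * Y := by rw [Matrix.mul_assoc]
    _ = Y := hY2

lemma mp_of {L M J : Matrix (Fin n) (Fin n) ℝ} (hL : Lᵀ = L) (hM : Mᵀ = M)
    (hJ : Jᵀ = J) (hLM : L * M = 1 - (n : ℝ)⁻¹ • J)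
    (hJL : J * L = 0) (hJM : J * M = 0) : IsMoorePenrose L M := by
  have hLMs : (L * M)ᵀ = L * M := by
    rw [hLM]; rw [transpose_sub, transpose_smul, hJ, transpose_one]
  have hML : M * L = L * M := by
    calc M * L = Mᵀ * Lᵀ := by rw [hL, hM]
      _ = (L * M)ᵀ := by rw [transpose_mul]
      _ = L * M := hLMs
  refine ⟨?_, ?_, hLMs, by rw [hML]; exact hLMs⟩
  · rw [hLM, sub_mul, one_mul, Matrix.smul_mul, hJL, smul_zero, sub_zero]
  · rw [hML, hLM, sub_mul, one_mul, Matrix.smul_mul, hJM, smul_zero, sub_zero]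

end StarRP1
namespace StarRP1

variable {n : ℕ}

/-- Pseudoinverse of the star Laplacian. -/
noncomputable def Ms (n : ℕ) (hub : Fin n) : Matrix (Fin n) (Fin n) ℝ :=
  1 - (((n : ℝ) + 1)/(n : ℝ)^2) • vecMulVec (o n) (o n)
    + ((n : ℝ))⁻¹ • vecMulVec (δ hub) (o n) + ((n : ℝ))⁻¹ • vecMulVec (o n) (δ hub)
    - vecMulVec (δ hub) (δ hub)

/-- Algebraic form of the star Laplacian. -/
noncomputable def Ls (n : ℕ) (hub : Fin n) : Matrix (Fin n) (Fin n) ℝ :=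
  1 - vecMulVec (δ hub) (o n) - vecMulVec (o n) (δ hub)
    + (n : ℝ) • vecMulVec (δ hub) (δ hub)

lemma lap_star_Ls (hub : Fin n) (hhub : hub.val = 0) :
    lap (starAdj n) = Ls n hub := by
  rw [lap_star hub hhub]; simp only [Ls]

lemma Ls_symm (hub : Fin n) : (Ls n hub)ᵀ = Ls n hub := by
  simp only [Ls, transpose_add, transpose_sub, transpose_smul, transpose_one,
    vmv_transpose]
  abel

lemma Ms_symm (hub : Fin n) : (Ms n hub)ᵀ = Ms n hub := by
  simp only [Ms, transpose_add, transpose_sub, transpose_smul, transpose_one,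
    vmv_transpose]
  abel

lemma key1 (hub : Fin n) (hn : (n : ℝ) ≠ 0) :
    Ls n hub * Ms n hub = 1 - (n : ℝ)⁻¹ • vecMulVec (o n) (o n) := by
  simp only [Ls, Ms, mul_sub, sub_mul, mul_add, add_mul, mul_one, one_mul,
    Matrix.mul_smul, Matrix.smul_mul, vmv_mul_vmv, dot_oo, dot_oδ, dot_δo, dot_δδ,
    if_pos rfl, if_true, smul_smul]
  match_scalars <;> field_simp <;> ring

lemma keyJL (hub : Fin n) :
    vecMulVec (o n) (o n) * Ls n hub = 0 := by
  simp only [Ls, mul_sub, sub_mul, mul_add, add_mul, mul_one, one_mul,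
    Matrix.mul_smul, Matrix.smul_mul, vmv_mul_vmv, dot_oo, dot_oδ, dot_δo, dot_δδ,
    if_pos rfl, if_true, smul_smul]
  match_scalars <;> field_simp <;> ring

lemma keyJM (hub : Fin n) (hn : (n : ℝ) ≠ 0) :
    vecMulVec (o n) (o n) * Ms n hub = 0 := by
  simp only [Ms, mul_sub, sub_mul, mul_add, add_mul, mul_one, one_mul,
    Matrix.mul_smul, Matrix.smul_mul, vmv_mul_vmv, dot_oo, dot_oδ, dot_δo, dot_δδ,
    if_pos rfl, smul_smul]
  match_scalars <;> field_simp <;> ring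

lemma Ls_mulVec_w (hub a b : Fin n) (ha : a ≠ hub) (hb : b ≠ hub) :
    (Ls n hub).mulVec (δ a - δ b) = δ a - δ b := by
  simp only [Ls, add_mulVec, sub_mulVec, one_mulVec, smul_mulVec, vmv_mulVec,
    dotProduct_sub, dot_δδ, dot_oδ, dot_δo, if_neg (Ne.symm ha), if_neg (Ne.symm hb),
    if_neg ha, if_neg hb]
  module

lemma Ms_mulVec_w (hub a b : Fin n) (ha : a ≠ hub) (hb : b ≠ hub) :
    (Ms n hub).mulVec (δ a - δ b) = δ a - δ b := by
  simp only [Ms, add_mulVec, sub_mulVec, one_mulVec, smul_mulVec, vmv_mulVec,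
    dotProduct_sub, dot_δδ, dot_oδ, dot_δo, if_neg (Ne.symm ha), if_neg (Ne.symm hb),
    if_neg ha, if_neg hb]
  module

lemma Ls_mulVec_v (hub a : Fin n) (ha : a ≠ hub) (hn : (n : ℝ) ≠ 0) :
    (Ls n hub).mulVec ((n : ℝ)⁻¹ • o n - δ a) = δ hub - δ a := by
  simp only [Ls, add_mulVec, sub_mulVec, one_mulVec, smul_mulVec, vmv_mulVec,
    dotProduct_sub, dotProduct_smul, dot_oo, dot_δδ, dot_oδ, dot_δo,
    if_neg (Ne.symm ha), if_neg ha, if_true, smul_eq_mul]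
  match_scalars <;> field_simp <;> ring

lemma Ms_mulVec_u (hub a : Fin n) (ha : a ≠ hub) (hn : (n : ℝ) ≠ 0) :
    (Ms n hub).mulVec (δ hub - δ a) = (n : ℝ)⁻¹ • o n - δ a := by
  simp only [Ms, add_mulVec, sub_mulVec, one_mulVec, smul_mulVec, vmv_mulVec,
    dotProduct_sub, dot_δδ, dot_oδ, dot_δo, if_neg (Ne.symm ha), if_neg ha,
    if_pos rfl, if_true, smul_eq_mul]
  match_scalars <;> field_simp <;> ring

/-! ### MP certifications -/

theorem mp_star (hub : Fin n) (hhub : hub.val = 0) (hn : (n : ℝ) ≠ 0) :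
    IsMoorePenrose (lap (starAdj n)) (Ms n hub) := by
  rw [lap_star hub hhub]
  exact mp_of (Ls_symm hub) (Ms_symm hub) (vmv_transpose _ _) (key1 hub hn)
    (keyJL hub) (keyJM hub hn)

theorem mp_star_hubleaf (hub a : Fin n) (hhub : hub.val = 0) (ha : a ≠ hub)
    (hn : (n : ℝ) ≠ 0) (Δ : ℝ) (hΔ : (1 : ℝ) + Δ ≠ 0) :
    IsMoorePenrose (lap (starAdj n + edgePert hub a Δ))
      (Ms n hub - (Δ / (1 + Δ)) •
        vecMulVec ((n : ℝ)⁻¹ • o n - δ a) ((n : ℝ)⁻¹ • o n - δ a)) := by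
  rw [lap_add, lap_star_Ls hub hhub, lap_pert hub a (Ne.symm ha) Δ]
  set u : Fin n → ℝ := δ hub - δ a with hu
  set v : Fin n → ℝ := (n : ℝ)⁻¹ • o n - δ a with hv
  have huv : u ⬝ᵥ v = 1 := by
    simp only [hu, hv, dotProduct_sub, sub_dotProduct, dotProduct_smul, smul_eq_mul,
      dot_oo, dot_oδ, dot_δo, dot_δδ, if_pos rfl, if_true, if_neg (Ne.symm ha), if_neg ha]
    field_simp <;> ring
  have hov : o n ⬝ᵥ v = 0 := by
    simp only [hv, dotProduct_sub, dotProduct_smul, smul_eq_mul, dot_oo, dot_oδ]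
    field_simp <;> ring
  have hou : o n ⬝ᵥ u = 0 := by
    simp only [hu, dotProduct_sub, dot_oδ]; ring
  apply mp_of (J := vecMulVec (o n) (o n))
  · rw [transpose_add, Ls_symm, transpose_smul, vmv_transpose]
  · rw [transpose_sub, Ms_symm, transpose_smul, vmv_transpose]
  · exact vmv_transpose _ _
  · rw [add_mul, mul_sub, mul_sub, Matrix.smul_mul, Matrix.smul_mul,
      Matrix.mul_smul, Matrix.mul_smul, key1 hub hn, mul_vmv, Ls_mulVec_v hub a ha hn,
      vmv_mul, Ms_symm, Ms_mulVec_u hub a ha hn, vmv_mul_vmv, huv]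
    rw [← hu, ← hv]
    match_scalars <;> field_simp <;> ring
  · rw [mul_add, keyJL hub, Matrix.mul_smul, vmv_mul_vmv, hou, zero_smul,
      smul_zero, add_zero]
  · rw [mul_sub, keyJM hub hn, Matrix.mul_smul, vmv_mul_vmv, hov, zero_smul,
      smul_zero, sub_zero]

theorem mp_star_leafleaf (hub a b : Fin n) (hhub : hub.val = 0) (ha : a ≠ hub)
    (hb : b ≠ hub) (hab : a ≠ b) (hn : (n : ℝ) ≠ 0) (Δ : ℝ)
    (hΔ : (1 : ℝ) + 2 * Δ ≠ 0) :
    IsMoorePenrose (lap (starAdj n + edgePert a b Δ))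
      (Ms n hub - (Δ / (1 + 2 * Δ)) • vecMulVec (δ a - δ b) (δ a - δ b)) := by
  rw [lap_add, lap_star_Ls hub hhub, lap_pert a b hab Δ]
  set w : Fin n → ℝ := δ a - δ b with hw
  have hww : w ⬝ᵥ w = 2 := by
    simp only [hw, dotProduct_sub, sub_dotProduct, dot_δδ, if_pos rfl,
      if_neg hab, if_neg (Ne.symm hab)]
    norm_num
  have how : o n ⬝ᵥ w = 0 := by
    simp only [hw, dotProduct_sub, dot_oδ]; ring
  apply mp_of (J := vecMulVec (o n) (o n))
  · rw [transpose_add, Ls_symm, transpose_smul, vmv_transpose]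
  · rw [transpose_sub, Ms_symm, transpose_smul, vmv_transpose]
  · exact vmv_transpose _ _
  · rw [add_mul, mul_sub, mul_sub, Matrix.smul_mul, Matrix.smul_mul,
      Matrix.mul_smul, Matrix.mul_smul, key1 hub hn, mul_vmv,
      Ls_mulVec_w hub a b ha hb, vmv_mul, Ms_symm, Ms_mulVec_w hub a b ha hb,
      vmv_mul_vmv, hww]
    match_scalars <;> field_simp <;> ring_nf <;>
      field_simp [show (1:ℝ) + Δ * 2 ≠ 0 by rwa [mul_comm]] <;> ring
  · rw [mul_add, keyJL hub, Matrix.mul_smul, vmv_mul_vmv, how, zero_smul,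
      smul_zero, add_zero]
  · rw [mul_sub, keyJM hub hn, Matrix.mul_smul, vmv_mul_vmv, how, zero_smul,
      smul_zero, sub_zero]

end StarRP1
namespace StarRP1

variable {n : ℕ}

lemma sum_sq_expand (x : Fin n → ℝ) :
    ∑ i, ∑ j, (x i - x j)^2
      = 2 * n * (∑ i, x i^2) - 2 * (∑ i, x i)^2 := by
  have h1 : ∀ i : Fin n, ∑ j, (x i - x j)^2
      = n * x i^2 + (∑ j, x j^2) - 2 * (x i * ∑ j, x j) := by
    intro i
    rw [Finset.sum_congr rfl fun j _ =>
      show (x i - x j)^2 = (x i^2 - 2 * (x i * x j)) + x j^2 from by ring]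
    rw [Finset.sum_add_distrib, Finset.sum_sub_distrib, Finset.sum_const,
      Finset.card_univ, Fintype.card_fin, nsmul_eq_mul, ← Finset.mul_sum,
      ← Finset.mul_sum]
    ring
  rw [Finset.sum_congr rfl fun i _ => h1 i, Finset.sum_sub_distrib,
    Finset.sum_add_distrib, Finset.sum_const, Finset.card_univ, Fintype.card_fin,
    nsmul_eq_mul, ← Finset.mul_sum, ← Finset.mul_sum, ← Finset.sum_mul]
  ring

end StarRP1

open StarRP1 in
/-- For the star graph `S_n` (hub `1`, here the index-0 vertex): perturbing a hub–leaf
edge `[hub, i₀]` by `Δ > -1` gives RP-1 distance `2(n-1)|Δ|/(1+Δ)`, and adding an edge of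
weight `Δ' ≥ 0` between two leaves `i₀, j₀` gives RP-1 distance `4nΔ'/(1+2Δ')`. -/
theorem rp1_star_graph (n : ℕ) (hn : 3 ≤ n)
    (hub i₀ j₀ : Fin n) (hhub : hub.val = 0)
    (hi₀ : i₀ ≠ hub) (hj₀ : j₀ ≠ hub) (hij : i₀ ≠ j₀)
    (Δ : ℝ) (hΔ : -1 < Δ) (Δ' : ℝ) (hΔ' : 0 ≤ Δ')
    (Ld Ld₂ Ld₃ : Matrix (Fin n) (Fin n) ℝ)
    (hMP : IsMoorePenrose (lap (starAdj n)) Ld)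
    (hMP₂ : IsMoorePenrose (lap (starAdj n + edgePert hub i₀ Δ)) Ld₂)
    (hMP₃ : IsMoorePenrose (lap (starAdj n + edgePert i₀ j₀ Δ')) Ld₃) :
    (∑ i, ∑ j, |effR Ld i j - effR Ld₂ i j| = 2 * (n - 1) * |Δ| / (1 + Δ))
    ∧ (∑ i, ∑ j, |effR Ld i j - effR Ld₃ i j| = 4 * n * Δ' / (1 + 2 * Δ')) := by
  have hn0 : (n : ℝ) ≠ 0 := Nat.cast_ne_zero.mpr (by omega)
  have h1Δ : (0 : ℝ) < 1 + Δ := by linarith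
  have h1Δ' : (0 : ℝ) < 1 + 2 * Δ' := by linarith
  have hLd : Ld = Ms n hub := mp_unique hMP (mp_star hub hhub hn0)
  have hLd₂ : Ld₂ = Ms n hub - (Δ / (1 + Δ)) •
      vecMulVec ((n : ℝ)⁻¹ • o n - δ i₀) ((n : ℝ)⁻¹ • o n - δ i₀) :=
    mp_unique hMP₂ (mp_star_hubleaf hub i₀ hhub hi₀ hn0 Δ h1Δ.ne')
  have hLd₃ : Ld₃ = Ms n hub - (Δ' / (1 + 2 * Δ')) •
      vecMulVec (δ i₀ - δ j₀) (δ i₀ - δ j₀) :=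
    mp_unique hMP₃ (mp_star_leafleaf hub i₀ j₀ hhub hi₀ hj₀ hij hn0 Δ' h1Δ'.ne')
  constructor
  · -- hub–leaf perturbation
    set c : ℝ := Δ / (1 + Δ) with hc
    set x : Fin n → ℝ := fun i => if i = i₀ then 1 else 0 with hx
    have hdiff : ∀ i j, effR Ld i j - effR Ld₂ i j = c * (x i - x j)^2 := by
      intro i j
      rw [hLd, hLd₂]
      simp only [effR, Matrix.sub_apply, Matrix.smul_apply, vecMulVec_apply,
        smul_eq_mul, δ, o, Pi.sub_apply, Pi.smul_apply, hx]
      ring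
    have habs : ∀ i j : Fin n, |effR Ld i j - effR Ld₂ i j| = |c| * (x i - x j)^2 := by
      intro i j
      rw [hdiff i j, abs_mul, abs_of_nonneg (sq_nonneg (x i - x j))]
    rw [Finset.sum_congr rfl fun i _ => Finset.sum_congr rfl fun j _ => habs i j]
    simp only [← Finset.mul_sum]
    rw [sum_sq_expand x]
    have hx1 : ∑ i, x i = 1 := by
      rw [hx]; simp [Finset.sum_ite_eq']
    have hx2 : ∑ i, x i^2 = 1 := by
      rw [Finset.sum_congr rfl fun i _ => show x i^2 = x i from by
        simp only [hx]; split_ifs <;> norm_num]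
      exact hx1
    rw [hx1, hx2, hc, abs_div, abs_of_pos h1Δ]
    field_simp
  · -- leaf–leaf perturbation
    set c : ℝ := Δ' / (1 + 2 * Δ') with hc
    set w : Fin n → ℝ := fun i =>
      (if i = i₀ then 1 else 0) - (if i = j₀ then 1 else 0) with hw
    have hc0 : 0 ≤ c := div_nonneg hΔ' h1Δ'.le
    have hdiff : ∀ i j, effR Ld i j - effR Ld₃ i j = c * (w i - w j)^2 := by
      intro i j
      rw [hLd, hLd₃]
      simp only [effR, Matrix.sub_apply, Matrix.smul_apply, vecMulVec_apply,
        smul_eq_mul, δ, Pi.sub_apply, hw]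
      ring
    have habs : ∀ i j : Fin n, |effR Ld i j - effR Ld₃ i j| = c * (w i - w j)^2 := by
      intro i j
      rw [hdiff i j, abs_of_nonneg (mul_nonneg hc0 (sq_nonneg _))]
    rw [Finset.sum_congr rfl fun i _ => Finset.sum_congr rfl fun j _ => habs i j]
    simp only [← Finset.mul_sum]
    rw [sum_sq_expand w]
    have hw1 : ∑ i, w i = 0 := by
      rw [hw]
      simp [Finset.sum_sub_distrib, Finset.sum_ite_eq']
    have hw2 : ∑ i, w i^2 = 2 := by
      have hpt : ∀ i, w i^2 = (if i = i₀ then (1:ℝ) else 0) + (if i = j₀ then 1 else 0) := by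
        intro i
        simp only [hw]
        split_ifs with h1 h2 <;> first
          | exact absurd (h1.symm.trans h2) hij
          | norm_num
      rw [Finset.sum_congr rfl fun i _ => hpt i, Finset.sum_add_distrib]
      simp [Finset.sum_ite_eq']
      norm_num
    rw [hw1, hw2, hc]
    field_simp
    ring
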